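/- arXiv:1706.04693 — 4 statements merged into one kernel-verified Lean document; each statement's English description precedes it below -/
import Mathlib

section
/- In every double interchange semigroup S, for all elements a, b, c, d, e, f, g, h, i, j of S the following commutativity relation holds (transposing d and g): ((a ▵ b) ▴ (c ▵ (d ▴ e))) ▵ (((f ▴ g) ▵ h) ▴ (i ▵ j)) = ((a ▵ b) ▴ (c ▵ (g ▴ e))) ▵ (((f ▴ d) ▵ h) ▴ (i ▵ j)). -/
/-- In every double interchange semigroup, the commutativity relation
transposing `d` and `g` holds (Configuration A theorem). Here `tri` is the
horizontal operation `▵` and `blk` is the vertical operation `▴`. -/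
theorem dis_commutativity_config_A {S : Type*} (tri blk : S → S → S)
    (htri : ∀ a b c : S, tri (tri a b) c = tri a (tri b c))
    (hblk : ∀ a b c : S, blk (blk a b) c = blk a (blk b c))
    (hint : ∀ a b c d : S, blk (tri a b) (tri c d) = tri (blk a c) (blk b d))
    (a b c d e f g h i j : S) :
    tri (blk (tri a b) (tri c (blk d e))) (blk (tri (blk f g) h) (tri i j)) =
    tri (blk (tri a b) (tri c (blk g e))) (blk (tri (blk f d) h) (tri i j)) :=
((((((((((((((((((((((congrArg (fun X => (tri (blk (tri a b) (tri c (blk d e))) X)) (hint (blk f g) h i j))).trans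
  (congrArg (fun X => (tri (blk (tri a b) (tri c (blk d e))) (tri X (blk h j)))) (hblk f g i))).trans
  (congrArg (fun X => (tri (blk (tri a b) (tri c (blk d e))) X)) ((hint f h (blk g i) j).symm))).trans
  (congrArg (fun X => X) ((hint (tri a b) (tri f h) (tri c (blk d e)) (tri (blk g i) j)).symm))).trans
  (congrArg (fun X => (blk X (tri (tri c (blk d e)) (tri (blk g i) j)))) ((htri (tri a b) f h).symm))).trans
  (congrArg (fun X => X) (hint (tri (tri a b) f) h (tri c (blk d e)) (tri (blk g i) j)))).trans
  (congrArg (fun X => (tri X (blk h (tri (blk g i) j)))) (hint (tri a b) f c (blk d e)))).trans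
  (congrArg (fun X => (tri (tri (blk (tri a b) c) X) (blk h (tri (blk g i) j)))) ((hblk f d e).symm))).trans
  (congrArg (fun X => (tri X (blk h (tri (blk g i) j)))) ((hint (tri a b) (blk f d) c e).symm))).trans
  (congrArg (fun X => X) ((hint (tri (tri a b) (blk f d)) h (tri c e) (tri (blk g i) j)).symm))).trans
  (congrArg (fun X => (blk X (tri (tri c e) (tri (blk g i) j)))) (htri (tri a b) (blk f d) h))).trans
  (congrArg (fun X => (blk X (tri (tri c e) (tri (blk g i) j)))) (htri a b (tri (blk f d) h)))).trans
  (congrArg (fun X => X) (hint a (tri b (tri (blk f d) h)) (tri c e) (tri (blk g i) j)))).trans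
  (congrArg (fun X => (tri (blk a (tri c e)) X)) (hint b (tri (blk f d) h) (blk g i) j))).trans
  (congrArg (fun X => (tri (blk a (tri c e)) (tri X (blk (tri (blk f d) h) j)))) ((hblk b g i).symm))).trans
  (congrArg (fun X => (tri (blk a (tri c e)) X)) ((hint (blk b g) (tri (blk f d) h) i j).symm))).trans
  (congrArg (fun X => X) ((hint a (tri (blk b g) (tri (blk f d) h)) (tri c e) (tri i j)).symm))).trans
  (congrArg (fun X => (blk X (tri (tri c e) (tri i j)))) ((htri a (blk b g) (tri (blk f d) h)).symm))).trans
  (congrArg (fun X => X) (hint (tri a (blk b g)) (tri (blk f d) h) (tri c e) (tri i j)))).trans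
  (congrArg (fun X => (tri X (blk (tri (blk f d) h) (tri i j)))) (hint a (blk b g) c e))).trans
  (congrArg (fun X => (tri (tri (blk a c) X) (blk (tri (blk f d) h) (tri i j)))) (hblk b g e))).trans
  (congrArg (fun X => (tri X (blk (tri (blk f d) h) (tri i j)))) ((hint a b c (blk g e)).symm))
end

section
/- In every double interchange semigroup S, for all elements a, b, c, d, e, f, g, h, i, j of S the following commutativity relation holds (transposing c and g): ((a ▵ (b ▴ c)) ▴ (f ▵ (g ▴ h))) ▵ ((d ▵ e) ▴ (i ▵ j)) = ((a ▵ (b ▴ g)) ▴ (f ▵ (c ▴ h))) ▵ ((d ▵ e) ▴ (i ▵ j)). -/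
/-- In every double interchange semigroup, the commutativity relation
transposing `c` and `g` holds (Configuration B theorem). Here `tri` is the
horizontal operation `▵` and `blk` is the vertical operation `▴`. -/
theorem dis_commutativity_config_B {S : Type*} (tri blk : S → S → S)
    (htri : ∀ a b c : S, tri (tri a b) c = tri a (tri b c))
    (hblk : ∀ a b c : S, blk (blk a b) c = blk a (blk b c))
    (hint : ∀ a b c d : S, blk (tri a b) (tri c d) = tri (blk a c) (blk b d))
    (a b c d e f g h i j : S) :
    tri (blk (tri a (blk b c)) (tri f (blk g h))) (blk (tri d e) (tri i j)) =
    tri (blk (tri a (blk b g)) (tri f (blk c h))) (blk (tri d e) (tri i j)) := by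
  calc tri (blk (tri a (blk b c)) (tri f (blk g h))) (blk (tri d e) (tri i j))
    _ = blk (tri (tri a (blk b c)) (tri d e)) (tri (tri f (blk g h)) (tri i j)) := by rw [← hint (tri a (blk b c)) (tri d e) (tri f (blk g h)) (tri i j)]
    _ = blk (tri (tri (tri a (blk b c)) d) e) (tri (tri f (blk g h)) (tri i j)) := by rw [← htri (tri a (blk b c)) d e]
    _ = tri (blk (tri (tri a (blk b c)) d) (tri f (blk g h))) (blk e (tri i j)) := by rw [hint (tri (tri a (blk b c)) d) e (tri f (blk g h)) (tri i j)]
    _ = tri (tri (blk (tri a (blk b c)) f) (blk d (blk g h))) (blk e (tri i j)) := by rw [hint (tri a (blk b c)) d f (blk g h)]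
    _ = tri (tri (blk (tri a (blk b c)) f) (blk (blk d g) h)) (blk e (tri i j)) := by rw [← hblk d g h]
    _ = tri (blk (tri (tri a (blk b c)) (blk d g)) (tri f h)) (blk e (tri i j)) := by rw [← hint (tri a (blk b c)) (blk d g) f h]
    _ = blk (tri (tri (tri a (blk b c)) (blk d g)) e) (tri (tri f h) (tri i j)) := by rw [← hint (tri (tri a (blk b c)) (blk d g)) e (tri f h) (tri i j)]
    _ = blk (tri (tri a (blk b c)) (tri (blk d g) e)) (tri (tri f h) (tri i j)) := by rw [htri (tri a (blk b c)) (blk d g) e]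
    _ = tri (blk (tri a (blk b c)) (tri f h)) (blk (tri (blk d g) e) (tri i j)) := by rw [hint (tri a (blk b c)) (tri (blk d g) e) (tri f h) (tri i j)]
    _ = tri (blk (tri a (blk b c)) (tri f h)) (tri (blk (blk d g) i) (blk e j)) := by rw [hint (blk d g) e i j]
    _ = tri (blk (tri a (blk b c)) (tri f h)) (tri (blk d (blk g i)) (blk e j)) := by rw [hblk d g i]
    _ = tri (blk (tri a (blk b c)) (tri f h)) (blk (tri d e) (tri (blk g i) j)) := by rw [← hint d e (blk g i) j]
    _ = tri (tri (blk a f) (blk (blk b c) h)) (blk (tri d e) (tri (blk g i) j)) := by rw [hint a (blk b c) f h]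
    _ = tri (tri (blk a f) (blk b (blk c h))) (blk (tri d e) (tri (blk g i) j)) := by rw [hblk b c h]
    _ = tri (blk (tri a b) (tri f (blk c h))) (blk (tri d e) (tri (blk g i) j)) := by rw [← hint a b f (blk c h)]
    _ = blk (tri (tri a b) (tri d e)) (tri (tri f (blk c h)) (tri (blk g i) j)) := by rw [← hint (tri a b) (tri d e) (tri f (blk c h)) (tri (blk g i) j)]
    _ = blk (tri a (tri b (tri d e))) (tri (tri f (blk c h)) (tri (blk g i) j)) := by rw [htri a b (tri d e)]
    _ = tri (blk a (tri f (blk c h))) (blk (tri b (tri d e)) (tri (blk g i) j)) := by rw [hint a (tri b (tri d e)) (tri f (blk c h)) (tri (blk g i) j)]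
    _ = tri (blk a (tri f (blk c h))) (tri (blk b (blk g i)) (blk (tri d e) j)) := by rw [hint b (tri d e) (blk g i) j]
    _ = tri (blk a (tri f (blk c h))) (tri (blk (blk b g) i) (blk (tri d e) j)) := by rw [← hblk b g i]
    _ = tri (blk a (tri f (blk c h))) (blk (tri (blk b g) (tri d e)) (tri i j)) := by rw [← hint (blk b g) (tri d e) i j]
    _ = blk (tri a (tri (blk b g) (tri d e))) (tri (tri f (blk c h)) (tri i j)) := by rw [← hint a (tri (blk b g) (tri d e)) (tri f (blk c h)) (tri i j)]
    _ = blk (tri (tri a (blk b g)) (tri d e)) (tri (tri f (blk c h)) (tri i j)) := by rw [← htri a (blk b g) (tri d e)]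
    _ = tri (blk (tri a (blk b g)) (tri f (blk c h))) (blk (tri d e) (tri i j)) := by rw [hint (tri a (blk b g)) (tri d e) (tri f (blk c h)) (tri i j)]
end

section
/- (Kock's relation.) In every double interchange semigroup S, for all elements a, b, c, d, e, f, g, h, i, j, k, l, m, n, p, q of S the following 16-argument relation holds (transposing f and g): (((a ▵ b) ▵ (c ▵ d)) ▴ ((e ▵ f) ▵ (g ▵ h))) ▴ (((i ▵ j) ▵ (k ▵ l)) ▴ ((m ▵ n) ▵ (p ▵ q))) = (((a ▵ b) ▵ (c ▵ d)) ▴ ((e ▵ g) ▵ (f ▵ h))) ▴ (((i ▵ j) ▵ (k ▵ l)) ▴ ((m ▵ n) ▵ (p ▵ q))). -/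
/-- Kock's 16-argument relation in every double interchange semigroup,
transposing `f` and `g`. Here `tri` is `▵` and `blk` is `▴`. -/
theorem dis_kock_relation {S : Type*} (tri blk : S → S → S)
    (htri : ∀ a b c : S, tri (tri a b) c = tri a (tri b c))
    (hblk : ∀ a b c : S, blk (blk a b) c = blk a (blk b c))
    (hint : ∀ a b c d : S, blk (tri a b) (tri c d) = tri (blk a c) (blk b d))
    (a b c d e f g h i j k l m n p q : S) :
    blk (blk (tri (tri a b) (tri c d)) (tri (tri e f) (tri g h)))
        (blk (tri (tri i j) (tri k l)) (tri (tri m n) (tri p q))) =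
    blk (blk (tri (tri a b) (tri c d)) (tri (tri e g) (tri f h)))
        (blk (tri (tri i j) (tri k l)) (tri (tri m n) (tri p q))) := by

  calc blk (blk (tri (tri a b) (tri c d)) (tri (tri e f) (tri g h))) (blk (tri (tri i j) (tri k l)) (tri (tri m n) (tri p q)))
    _ = blk (blk (tri (tri a b) (tri c d)) (tri (tri e f) (tri g h))) (blk (tri (tri (tri i j) k) l) (tri (tri m n) (tri p q))) := by rw [← htri (tri i j) k l]
    _ = blk (blk (tri a (tri b (tri c d))) (tri (tri e f) (tri g h))) (blk (tri (tri (tri i j) k) l) (tri (tri m n) (tri p q))) := by rw [htri a b (tri c d)]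
    _ = blk (tri (blk a (tri e f)) (blk (tri b (tri c d)) (tri g h))) (blk (tri (tri (tri i j) k) l) (tri (tri m n) (tri p q))) := by rw [hint a (tri b (tri c d)) (tri e f) (tri g h)]
    _ = blk (blk (tri (blk a (tri e f)) (blk (tri b (tri c d)) (tri g h))) (tri (tri (tri i j) k) l)) (tri (tri m n) (tri p q)) := by rw [← hblk (tri (blk a (tri e f)) (blk (tri b (tri c d)) (tri g h))) (tri (tri (tri i j) k) l) (tri (tri m n) (tri p q))]
    _ = blk (tri (blk (blk a (tri e f)) (tri (tri i j) k)) (blk (blk (tri b (tri c d)) (tri g h)) l)) (tri (tri m n) (tri p q)) := by rw [hint (blk a (tri e f)) (blk (tri b (tri c d)) (tri g h)) (tri (tri i j) k) l]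
    _ = blk (tri (blk a (blk (tri e f) (tri (tri i j) k))) (blk (blk (tri b (tri c d)) (tri g h)) l)) (tri (tri m n) (tri p q)) := by rw [hblk a (tri e f) (tri (tri i j) k)]
    _ = blk (tri (blk a (tri (blk e (tri i j)) (blk f k))) (blk (blk (tri b (tri c d)) (tri g h)) l)) (tri (tri m n) (tri p q)) := by rw [hint e f (tri i j) k]
    _ = blk (blk (tri a (blk (tri b (tri c d)) (tri g h))) (tri (tri (blk e (tri i j)) (blk f k)) l)) (tri (tri m n) (tri p q)) := by rw [← hint a (blk (tri b (tri c d)) (tri g h)) (tri (blk e (tri i j)) (blk f k)) l]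
    _ = blk (blk (tri a (blk (tri b (tri c d)) (tri g h))) (tri (blk e (tri i j)) (tri (blk f k) l))) (tri (tri m n) (tri p q)) := by rw [htri (blk e (tri i j)) (blk f k) l]
    _ = blk (tri (blk a (blk e (tri i j))) (blk (blk (tri b (tri c d)) (tri g h)) (tri (blk f k) l))) (tri (tri m n) (tri p q)) := by rw [hint a (blk (tri b (tri c d)) (tri g h)) (blk e (tri i j)) (tri (blk f k) l)]
    _ = blk (tri (blk a (blk e (tri i j))) (blk (tri (blk b g) (blk (tri c d) h)) (tri (blk f k) l))) (tri (tri m n) (tri p q)) := by rw [hint b (tri c d) g h]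
    _ = blk (tri (blk a (blk e (tri i j))) (tri (blk (blk b g) (blk f k)) (blk (blk (tri c d) h) l))) (tri (tri m n) (tri p q)) := by rw [hint (blk b g) (blk (tri c d) h) (blk f k) l]
    _ = blk (tri (blk a (blk e (tri i j))) (tri (blk (blk b g) (blk f k)) (blk (tri c d) (blk h l)))) (tri (tri m n) (tri p q)) := by rw [hblk (tri c d) h l]
    _ = blk (tri (blk (blk a e) (tri i j)) (tri (blk (blk b g) (blk f k)) (blk (tri c d) (blk h l)))) (tri (tri m n) (tri p q)) := by rw [← hblk a e (tri i j)]
    _ = blk (tri (blk (blk a e) (tri i j)) (blk (tri (blk b g) (tri c d)) (tri (blk f k) (blk h l)))) (tri (tri m n) (tri p q)) := by rw [← hint (blk b g) (tri c d) (blk f k) (blk h l)]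
    _ = blk (blk (tri (blk a e) (tri (blk b g) (tri c d))) (tri (tri i j) (tri (blk f k) (blk h l)))) (tri (tri m n) (tri p q)) := by rw [← hint (blk a e) (tri (blk b g) (tri c d)) (tri i j) (tri (blk f k) (blk h l))]
    _ = blk (blk (tri (tri (blk a e) (blk b g)) (tri c d)) (tri (tri i j) (tri (blk f k) (blk h l)))) (tri (tri m n) (tri p q)) := by rw [← htri (blk a e) (blk b g) (tri c d)]
    _ = blk (blk (tri (tri (blk a e) (blk b g)) (tri c d)) (tri (tri i j) (blk (tri f h) (tri k l)))) (tri (tri m n) (tri p q)) := by rw [← hint f h k l]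
    _ = blk (blk (tri (blk (tri a b) (tri e g)) (tri c d)) (tri (tri i j) (blk (tri f h) (tri k l)))) (tri (tri m n) (tri p q)) := by rw [← hint a b e g]
    _ = blk (tri (blk (blk (tri a b) (tri e g)) (tri i j)) (blk (tri c d) (blk (tri f h) (tri k l)))) (tri (tri m n) (tri p q)) := by rw [hint (blk (tri a b) (tri e g)) (tri c d) (tri i j) (blk (tri f h) (tri k l))]
    _ = blk (tri (blk (blk (tri a b) (tri e g)) (tri i j)) (blk (blk (tri c d) (tri f h)) (tri k l))) (tri (tri m n) (tri p q)) := by rw [← hblk (tri c d) (tri f h) (tri k l)]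
    _ = blk (blk (tri (blk (tri a b) (tri e g)) (blk (tri c d) (tri f h))) (tri (tri i j) (tri k l))) (tri (tri m n) (tri p q)) := by rw [← hint (blk (tri a b) (tri e g)) (blk (tri c d) (tri f h)) (tri i j) (tri k l)]
    _ = blk (tri (blk (tri a b) (tri e g)) (blk (tri c d) (tri f h))) (blk (tri (tri i j) (tri k l)) (tri (tri m n) (tri p q))) := by rw [hblk (tri (blk (tri a b) (tri e g)) (blk (tri c d) (tri f h))) (tri (tri i j) (tri k l)) (tri (tri m n) (tri p q))]
    _ = blk (blk (tri (tri a b) (tri c d)) (tri (tri e g) (tri f h))) (blk (tri (tri i j) (tri k l)) (tri (tri m n) (tri p q))) := by rw [← hint (tri a b) (tri c d) (tri e g) (tri f h)]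
end

section
/- (Bremner–Madariaga nine-variable relation.) In every double interchange semigroup S, for all elements a, b, c, d, e, f, g, h, i of S the following relation holds (transposing e and g): ((a ▵ b) ▵ c) ▴ (((d ▵ (e ▴ f)) ▵ (g ▴ h)) ▵ i) = ((a ▵ b) ▵ c) ▴ (((d ▵ (g ▴ f)) ▵ (e ▴ h)) ▵ i). -/
/-- The Bremner–Madariaga nine-variable commutativity relation in every double
interchange semigroup, transposing `e` and `g`. Here `tri` is `▵` and `blk` is `▴`. -/
theorem dis_bremner_madariaga {S : Type*} (tri blk : S → S → S)
    (htri : ∀ a b c : S, tri (tri a b) c = tri a (tri b c))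
    (hblk : ∀ a b c : S, blk (blk a b) c = blk a (blk b c))
    (hint : ∀ a b c d : S, blk (tri a b) (tri c d) = tri (blk a c) (blk b d))
    (a b c d e f g h i : S) :
    blk (tri (tri a b) c) (tri (tri (tri d (blk e f)) (blk g h)) i) =
    blk (tri (tri a b) c) (tri (tri (tri d (blk g f)) (blk e h)) i) := by
  calc blk (tri (tri a b) c) (tri (tri (tri d (blk e f)) (blk g h)) i)
    _ = blk (tri (tri a b) c) (tri (tri d (blk e f)) (tri (blk g h) i)) := by rw [htri (tri d (blk e f)) (blk g h) i]
    _ = tri (blk (tri a b) (tri d (blk e f))) (blk c (tri (blk g h) i)) := by rw [hint (tri a b) c (tri d (blk e f)) (tri (blk g h) i)]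
    _ = tri (tri (blk a d) (blk b (blk e f))) (blk c (tri (blk g h) i)) := by rw [hint a b d (blk e f)]
    _ = tri (tri (blk a d) (blk (blk b e) f)) (blk c (tri (blk g h) i)) := by rw [← hblk b e f]
    _ = tri (blk (tri a (blk b e)) (tri d f)) (blk c (tri (blk g h) i)) := by rw [← hint a (blk b e) d f]
    _ = blk (tri (tri a (blk b e)) c) (tri (tri d f) (tri (blk g h) i)) := by rw [← hint (tri a (blk b e)) c (tri d f) (tri (blk g h) i)]
    _ = blk (tri a (tri (blk b e) c)) (tri (tri d f) (tri (blk g h) i)) := by rw [htri a (blk b e) c]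
    _ = tri (blk a (tri d f)) (blk (tri (blk b e) c) (tri (blk g h) i)) := by rw [hint a (tri (blk b e) c) (tri d f) (tri (blk g h) i)]
    _ = tri (blk a (tri d f)) (tri (blk (blk b e) (blk g h)) (blk c i)) := by rw [hint (blk b e) c (blk g h) i]
    _ = tri (blk a (tri d f)) (tri (blk (blk (blk b e) g) h) (blk c i)) := by rw [← hblk (blk b e) g h]
    _ = tri (blk a (tri d f)) (blk (tri (blk (blk b e) g) c) (tri h i)) := by rw [← hint (blk (blk b e) g) c h i]
    _ = blk (tri a (tri (blk (blk b e) g) c)) (tri (tri d f) (tri h i)) := by rw [← hint a (tri (blk (blk b e) g) c) (tri d f) (tri h i)]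
    _ = blk (tri (tri a (blk (blk b e) g)) c) (tri (tri d f) (tri h i)) := by rw [htri a (blk (blk b e) g) c]
    _ = tri (blk (tri a (blk (blk b e) g)) (tri d f)) (blk c (tri h i)) := by rw [hint (tri a (blk (blk b e) g)) c (tri d f) (tri h i)]
    _ = tri (tri (blk a d) (blk (blk (blk b e) g) f)) (blk c (tri h i)) := by rw [hint a (blk (blk b e) g) d f]
    _ = tri (tri (blk a d) (blk (blk b e) (blk g f))) (blk c (tri h i)) := by rw [hblk (blk b e) g f]
    _ = tri (blk (tri a (blk b e)) (tri d (blk g f))) (blk c (tri h i)) := by rw [← hint a (blk b e) d (blk g f)]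
    _ = blk (tri (tri a (blk b e)) c) (tri (tri d (blk g f)) (tri h i)) := by rw [← hint (tri a (blk b e)) c (tri d (blk g f)) (tri h i)]
    _ = blk (tri (tri a (blk b e)) c) (tri (tri (tri d (blk g f)) h) i) := by rw [← htri (tri d (blk g f)) h i]
    _ = tri (blk (tri a (blk b e)) (tri (tri d (blk g f)) h)) (blk c i) := by rw [hint (tri a (blk b e)) c (tri (tri d (blk g f)) h) i]
    _ = tri (tri (blk a (tri d (blk g f))) (blk (blk b e) h)) (blk c i) := by rw [hint a (blk b e) (tri d (blk g f)) h]
    _ = tri (tri (blk a (tri d (blk g f))) (blk b (blk e h))) (blk c i) := by rw [hblk b e h]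
    _ = tri (blk (tri a b) (tri (tri d (blk g f)) (blk e h))) (blk c i) := by rw [← hint a b (tri d (blk g f)) (blk e h)]
    _ = blk (tri (tri a b) c) (tri (tri (tri d (blk g f)) (blk e h)) i) := by rw [← hint (tri a b) c (tri (tri d (blk g f)) (blk e h)) i]
end
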